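/- The linear map φ from the filiform Lie algebra Q_{2n} to gl(2n, ℂ) defined on the basis by φ(e_1) = ∑_{k=2}^{2n-2} E_{k,k+1}, φ(e_i) = (-1)^i E_{1,i} + E_{2n-i+1,2n} for 2 ≤ i ≤ 2n-1, and φ(e_{2n}) = -2 E_{1,2n}, is an injective Lie algebra homomorphism, i.e., φ([e_i,e_j]) = φ(e_i)φ(e_j) - φ(e_j)φ(e_i) for all i,j, and φ is injective. -/

import Mathlib

/-- Structure constants of the filiform Lie algebra `Q_{2n}`:
`[e_1,e_i] = -[e_i,e_1] = e_{i+1}` for `2 ≤ i ≤ 2n-2` and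
`[e_{2n+1-i},e_i] = -[e_i,e_{2n+1-i}] = (-1)^i e_{2n}` for `2 ≤ i ≤ n`. -/
noncomputable def cQ (n i j k : ℕ) : ℂ :=
  (if i = 1 ∧ 2 ≤ j ∧ j ≤ 2 * n - 2 ∧ k = j + 1 then 1 else 0)
  - (if j = 1 ∧ 2 ≤ i ∧ i ≤ 2 * n - 2 ∧ k = i + 1 then 1 else 0)
  + (if 2 ≤ j ∧ j ≤ n ∧ i = 2 * n + 1 - j ∧ k = 2 * n then (-1 : ℂ) ^ j else 0)
  - (if 2 ≤ i ∧ i ≤ n ∧ j = 2 * n + 1 - i ∧ k = 2 * n then (-1 : ℂ) ^ i else 0)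
/-- The elementary `N × N` matrix with `1` in (1-based) position `(i,j)`. -/
noncomputable def elemMat (N : ℕ) (i j : ℕ) : Matrix (Fin N) (Fin N) ℂ :=
  Matrix.of fun a b => if (a : ℕ) + 1 = i ∧ (b : ℕ) + 1 = j then 1 else 0

/-- The matrices representing the basis of `Q_{2n}`:
`φ(e_1) = ∑_{k=2}^{2n-2} E_{k,k+1}`,
`φ(e_i) = (-1)^i E_{1,i} + E_{2n-i+1,2n}` for `2 ≤ i ≤ 2n-1`,
`φ(e_{2n}) = -2 E_{1,2n}`. -/
noncomputable def MQ (n i : ℕ) : Matrix (Fin (2 * n)) (Fin (2 * n)) ℂ :=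
  if i = 1 then ∑ k ∈ Finset.Icc 2 (2 * n - 2), elemMat (2 * n) k (k + 1)
  else if i = 2 * n then (-2 : ℂ) • elemMat (2 * n) 1 (2 * n)
  else ((-1 : ℂ) ^ i) • elemMat (2 * n) 1 i
    + elemMat (2 * n) (2 * n - i + 1) (2 * n)

lemma elemMat_apply (N i j : ℕ) (a b : Fin N) :
    elemMat N i j a b = if (a : ℕ) + 1 = i ∧ (b : ℕ) + 1 = j then 1 else 0 := rfl

lemma elemMat_mul (N i j k l : ℕ) :
    elemMat N i j * elemMat N k l =
      if j = k ∧ 1 ≤ j ∧ j ≤ N then elemMat N i l else (0 : Matrix (Fin N) (Fin N) ℂ) := by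
  ext a b
  rw [Matrix.mul_apply]
  by_cases h : j = k ∧ 1 ≤ j ∧ j ≤ N
  · obtain ⟨rfl, h1, hN⟩ := h
    rw [if_pos ⟨rfl, h1, hN⟩]
    have hlt : j - 1 < N := by omega
    have hc0 : (((⟨j - 1, hlt⟩ : Fin N) : ℕ)) + 1 = j := by
      simp only [Fin.val_mk]; omega
    rw [Finset.sum_eq_single (⟨j - 1, hlt⟩ : Fin N)]
    · simp only [elemMat_apply, hc0, and_true, true_and, ite_mul, one_mul, zero_mul]
      split_ifs <;> first | rfl | tauto
    · intro c _ hc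
      simp only [elemMat_apply]
      rw [if_neg (show ¬((a : ℕ) + 1 = i ∧ (c : ℕ) + 1 = j) by
        rintro ⟨-, hcj⟩
        exact hc (Fin.ext (by omega))), zero_mul]
    · intro hj; exact absurd (Finset.mem_univ _) hj
  · rw [if_neg h]
    apply Finset.sum_eq_zero
    intro c _
    simp only [elemMat_apply, Matrix.zero_apply]
    by_cases hc : (c : ℕ) + 1 = j
    · rw [if_neg (show ¬((c : ℕ) + 1 = k ∧ (b : ℕ) + 1 = l) by
        rintro ⟨hck, -⟩
        exact h ⟨by omega, by omega, by omega⟩), mul_zero]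
    · rw [if_neg (fun hh => hc hh.2), zero_mul]

lemma MQ_one (n : ℕ) : MQ n 1 = ∑ k ∈ Finset.Icc 2 (2 * n - 2), elemMat (2 * n) k (k + 1) :=
  if_pos rfl

lemma MQ_mid (n i : ℕ) (hn : 2 ≤ n) (h1 : 2 ≤ i) (h2 : i ≤ 2 * n - 1) :
    MQ n i = ((-1 : ℂ) ^ i) • elemMat (2 * n) 1 i
      + elemMat (2 * n) (2 * n - i + 1) (2 * n) := by
  unfold MQ; rw [if_neg (by omega), if_neg (by omega)]

lemma MQ_last (n : ℕ) (hn : 2 ≤ n) : MQ n (2 * n) = (-2 : ℂ) • elemMat (2 * n) 1 (2 * n) := by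
  unfold MQ; rw [if_neg (by omega), if_pos rfl]

lemma P2 (n i : ℕ) (hn : 2 ≤ n) (h1 : 2 ≤ i) (h2 : i ≤ 2 * n - 1) :
    MQ n 1 * MQ n i =
      if i ≤ 2 * n - 2 then elemMat (2 * n) (2 * n - i) (2 * n) else 0 := by
  rw [MQ_mid n i hn h1 h2, MQ_one, Finset.sum_mul]
  rw [Finset.sum_congr rfl (fun k hk => show _ = if k = 2 * n - i then elemMat (2*n) (2*n-i) (2*n) else 0 from by
    simp only [Finset.mem_Icc] at hk
    rw [mul_add, mul_smul_comm, elemMat_mul, elemMat_mul,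
      if_neg (by omega), smul_zero, zero_add]
    by_cases hki : k = 2 * n - i
    · rw [if_pos (by omega), if_pos hki, hki]
    · rw [if_neg (by omega), if_neg hki])]
  rw [Finset.sum_ite_eq' (Finset.Icc 2 (2 * n - 2)) (2 * n - i)
    (fun _ => elemMat (2 * n) (2 * n - i) (2 * n))]
  by_cases h : i ≤ 2 * n - 2
  · rw [if_pos (by simp only [Finset.mem_Icc]; omega), if_pos h]
  · rw [if_neg (by simp only [Finset.mem_Icc]; omega), if_neg h]

lemma P3 (n i : ℕ) (hn : 2 ≤ n) (h1 : 2 ≤ i) (h2 : i ≤ 2 * n - 1) :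
    MQ n i * MQ n 1 =
      if i ≤ 2 * n - 2 then ((-1 : ℂ) ^ i) • elemMat (2 * n) 1 (i + 1) else 0 := by
  rw [MQ_mid n i hn h1 h2, MQ_one, Finset.mul_sum]
  rw [Finset.sum_congr rfl (fun k hk => show _ = if k = i then ((-1:ℂ)^i) • elemMat (2*n) 1 (i+1) else 0 from by
    simp only [Finset.mem_Icc] at hk
    simp only [add_mul, smul_mul_assoc, mul_smul_comm, elemMat_mul]
    rw [if_neg (show ¬(2 * n = k ∧ 1 ≤ 2 * n ∧ 2 * n ≤ 2 * n) by omega), add_zero]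
    by_cases hki : k = i
    · rw [if_pos (show i = k ∧ 1 ≤ i ∧ i ≤ 2 * n by omega), hki, if_pos rfl]
    · rw [if_neg (show ¬(i = k ∧ 1 ≤ i ∧ i ≤ 2 * n) by omega), smul_zero, if_neg hki])]
  rw [Finset.sum_ite_eq' (Finset.Icc 2 (2 * n - 2)) i
    (fun _ => ((-1:ℂ)^i) • elemMat (2 * n) 1 (i + 1))]
  by_cases h : i ≤ 2 * n - 2
  · rw [if_pos (by simp only [Finset.mem_Icc]; omega), if_pos h]
  · rw [if_neg (by simp only [Finset.mem_Icc]; omega), if_neg h]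

lemma P4 (n i j : ℕ) (hn : 2 ≤ n) (hi1 : 2 ≤ i) (hi2 : i ≤ 2 * n - 1)
    (hj1 : 2 ≤ j) (hj2 : j ≤ 2 * n - 1) :
    MQ n i * MQ n j =
      if i + j = 2 * n + 1 then ((-1 : ℂ) ^ i) • elemMat (2 * n) 1 (2 * n) else 0 := by
  rw [MQ_mid n i hn hi1 hi2, MQ_mid n j hn hj1 hj2]
  simp only [add_mul, mul_add, smul_mul_assoc, mul_smul_comm, elemMat_mul]
  rw [if_neg (show ¬(i = 1 ∧ 1 ≤ i ∧ i ≤ 2 * n) by omega),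
    if_neg (show ¬(2 * n = 1 ∧ 1 ≤ 2 * n ∧ 2 * n ≤ 2 * n) by omega),
    if_neg (show ¬(2 * n = 2 * n - j + 1 ∧ 1 ≤ 2 * n ∧ 2 * n ≤ 2 * n) by omega)]
  by_cases hij : i + j = 2 * n + 1
  · rw [if_pos (show i = 2 * n - j + 1 ∧ 1 ≤ i ∧ i ≤ 2 * n by omega), if_pos hij]
    simp
  · rw [if_neg (show ¬(i = 2 * n - j + 1 ∧ 1 ≤ i ∧ i ≤ 2 * n) by omega), if_neg hij]
    simp

lemma P1l (n : ℕ) (hn : 2 ≤ n) : MQ n 1 * MQ n (2 * n) = 0 := by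
  rw [MQ_one, MQ_last n hn, Finset.sum_mul]
  apply Finset.sum_eq_zero
  intro k hk
  simp only [Finset.mem_Icc] at hk
  rw [mul_smul_comm, elemMat_mul, if_neg (by omega), smul_zero]

lemma P1r (n : ℕ) (hn : 2 ≤ n) : MQ n (2 * n) * MQ n 1 = 0 := by
  rw [MQ_one, MQ_last n hn, Finset.mul_sum]
  apply Finset.sum_eq_zero
  intro k hk
  simp only [Finset.mem_Icc] at hk
  rw [smul_mul_assoc, elemMat_mul, if_neg (by omega), smul_zero]

lemma P5l (n i : ℕ) (hn : 2 ≤ n) (h1 : 2 ≤ i) (h2 : i ≤ 2 * n - 1) :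
    MQ n i * MQ n (2 * n) = 0 := by
  rw [MQ_mid n i hn h1 h2, MQ_last n hn]
  simp only [add_mul, mul_add, smul_mul_assoc, mul_smul_comm, elemMat_mul]
  rw [if_neg (show ¬(i = 1 ∧ 1 ≤ i ∧ i ≤ 2 * n) by omega),
    if_neg (show ¬(2 * n = 1 ∧ 1 ≤ 2 * n ∧ 2 * n ≤ 2 * n) by omega)]
  simp

lemma P5r (n i : ℕ) (hn : 2 ≤ n) (h1 : 2 ≤ i) (h2 : i ≤ 2 * n - 1) :
    MQ n (2 * n) * MQ n i = 0 := by
  rw [MQ_mid n i hn h1 h2, MQ_last n hn]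
  simp only [add_mul, mul_add, smul_mul_assoc, mul_smul_comm, elemMat_mul]
  rw [if_neg (show ¬(2 * n = 1 ∧ 1 ≤ 2 * n ∧ 2 * n ≤ 2 * n) by omega),
    if_neg (show ¬(2 * n = 2 * n - i + 1 ∧ 1 ≤ 2 * n ∧ 2 * n ≤ 2 * n) by omega)]
  simp

lemma P6 (n : ℕ) (hn : 2 ≤ n) : MQ n (2 * n) * MQ n (2 * n) = 0 := by
  rw [MQ_last n hn]
  simp only [smul_mul_assoc, mul_smul_comm, elemMat_mul]
  rw [if_neg (show ¬(2 * n = 1 ∧ 1 ≤ 2 * n ∧ 2 * n ≤ 2 * n) by omega)]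
  simp

lemma sum_cQ_zero (n i j : ℕ) (h : ∀ k, cQ n i j k = 0) :
    ∑ k ∈ Finset.Icc 1 (2 * n), cQ n i j k • MQ n k = 0 :=
  Finset.sum_eq_zero fun k _ => by rw [h k, zero_smul]

lemma sum_pick (n v : ℕ) (c : ℂ) (h1 : 1 ≤ v) (h2 : v ≤ 2 * n) :
    ∑ k ∈ Finset.Icc 1 (2 * n), (if k = v then c else 0) • MQ n k = c • MQ n v := by
  rw [Finset.sum_congr rfl (fun k _ => by
    rw [ite_smul, zero_smul] :
    ∀ k ∈ Finset.Icc 1 (2 * n), (if k = v then c else 0) • MQ n k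
      = if k = v then c • MQ n k else 0),
    Finset.sum_ite_eq' (Finset.Icc 1 (2 * n)) v (fun k => c • MQ n k),
    if_pos (Finset.mem_Icc.mpr ⟨h1, h2⟩)]

theorem part1 (n : ℕ) (hn : 2 ≤ n) :
    ∀ i ∈ Finset.Icc 1 (2 * n), ∀ j ∈ Finset.Icc 1 (2 * n),
      ∑ k ∈ Finset.Icc 1 (2 * n), cQ n i j k • MQ n k
        = MQ n i * MQ n j - MQ n j * MQ n i := by
  intro i hi j hj
  simp only [Finset.mem_Icc] at hi hj
  obtain ⟨hi1, hi2⟩ := hi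
  obtain ⟨hj1, hj2⟩ := hj
  by_cases hie : i = 1
  · subst hie
    by_cases hje : j = 1
    · subst hje
      rw [sub_self]
      exact sum_cQ_zero n 1 1 fun k => by
        unfold cQ; split_ifs <;> first | ring1 | (exfalso; omega)
    by_cases hje2 : j = 2 * n
    · subst hje2
      rw [P1l n hn, P1r n hn, sub_self]
      exact sum_cQ_zero n 1 (2 * n) fun k => by
        unfold cQ; split_ifs <;> first | ring1 | (exfalso; omega)
    · have hjm1 : 2 ≤ j := by omega
      have hjm2 : j ≤ 2 * n - 1 := by omega
      rw [P2 n j hn hjm1 hjm2, P3 n j hn hjm1 hjm2]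
      by_cases hj3 : j ≤ 2 * n - 2
      · rw [if_pos hj3, if_pos hj3]
        have hc : ∀ k, cQ n 1 j k = if k = j + 1 then 1 else 0 := by
          intro k
          unfold cQ; split_ifs <;> first | ring1 | (exfalso; omega)
        rw [Finset.sum_congr rfl fun k _ => by rw [hc k],
          sum_pick n (j + 1) 1 (by omega) (by omega), one_smul,
          MQ_mid n (j + 1) hn (by omega) (by omega),
          show 2 * n - (j + 1) + 1 = 2 * n - j from by omega,
          show ((-1 : ℂ)) ^ (j + 1) = -(-1) ^ j from by rw [pow_succ]; ring]
        module
      · rw [if_neg hj3, if_neg hj3, sub_zero]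
        exact sum_cQ_zero n 1 j fun k => by
          unfold cQ; split_ifs <;> first | ring1 | (exfalso; omega)
  by_cases hie2 : i = 2 * n
  · subst hie2
    by_cases hje : j = 1
    · subst hje
      rw [P1r n hn, P1l n hn, sub_self]
      exact sum_cQ_zero n (2 * n) 1 fun k => by
        unfold cQ; split_ifs <;> first | ring1 | (exfalso; omega)
    by_cases hje2 : j = 2 * n
    · subst hje2
      rw [P6 n hn, sub_self]
      exact sum_cQ_zero n (2 * n) (2 * n) fun k => by
        unfold cQ; split_ifs <;> first | ring1 | (exfalso; omega)
    · have hjm1 : 2 ≤ j := by omega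
      have hjm2 : j ≤ 2 * n - 1 := by omega
      rw [P5r n j hn hjm1 hjm2, P5l n j hn hjm1 hjm2, sub_self]
      exact sum_cQ_zero n (2 * n) j fun k => by
        unfold cQ; split_ifs <;> first | ring1 | (exfalso; omega)
  -- i mid
  have him1 : 2 ≤ i := by omega
  have him2 : i ≤ 2 * n - 1 := by omega
  by_cases hje : j = 1
  · subst hje
    rw [P3 n i hn him1 him2, P2 n i hn him1 him2]
    by_cases hi3 : i ≤ 2 * n - 2
    · rw [if_pos hi3, if_pos hi3]
      have hc : ∀ k, cQ n i 1 k = if k = i + 1 then -1 else 0 := by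
        intro k
        unfold cQ; split_ifs <;> first | ring1 | (exfalso; omega)
      rw [Finset.sum_congr rfl fun k _ => by rw [hc k],
        sum_pick n (i + 1) (-1) (by omega) (by omega),
        MQ_mid n (i + 1) hn (by omega) (by omega),
        show 2 * n - (i + 1) + 1 = 2 * n - i from by omega,
        show ((-1 : ℂ)) ^ (i + 1) = -(-1) ^ i from by rw [pow_succ]; ring]
      module
    · rw [if_neg hi3, if_neg hi3, sub_zero]
      exact sum_cQ_zero n i 1 fun k => by
        unfold cQ; split_ifs <;> first | ring1 | (exfalso; omega)
  by_cases hje2 : j = 2 * n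
  · subst hje2
    rw [P5l n i hn him1 him2, P5r n i hn him1 him2, sub_self]
    exact sum_cQ_zero n i (2 * n) fun k => by
      unfold cQ; split_ifs <;> first | ring1 | (exfalso; omega)
  -- j mid
  have hjm1 : 2 ≤ j := by omega
  have hjm2 : j ≤ 2 * n - 1 := by omega
  rw [P4 n i j hn him1 him2 hjm1 hjm2, P4 n j i hn hjm1 hjm2 him1 him2]
  by_cases hij : i + j = 2 * n + 1
  · rw [if_pos hij, if_pos (by omega)]
    have hmul : ((-1 : ℂ)) ^ i * (-1) ^ j = -1 := by
      rw [← pow_add, hij, pow_succ, pow_mul]; norm_num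
    have hsq : ((-1 : ℂ)) ^ j * (-1) ^ j = 1 := by
      rw [← pow_add, ← two_mul, pow_mul]; norm_num
    have hpar : ((-1 : ℂ)) ^ i = -(-1) ^ j := by
      linear_combination (-1 : ℂ) ^ j * hmul - (-1 : ℂ) ^ i * hsq
    by_cases hjn : j ≤ n
    · have hc : ∀ k, cQ n i j k = if k = 2 * n then (-1 : ℂ) ^ j else 0 := by
        intro k
        unfold cQ; split_ifs <;> first | ring1 | (exfalso; omega)
      rw [Finset.sum_congr rfl fun k _ => by rw [hc k],
        sum_pick n (2 * n) ((-1 : ℂ) ^ j) (by omega) (by omega),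
        MQ_last n hn, smul_smul, ← sub_smul]
      congr 1
      rw [hpar]; ring
    · have hc : ∀ k, cQ n i j k = if k = 2 * n then -(-1 : ℂ) ^ i else 0 := by
        intro k
        unfold cQ; split_ifs <;> first | ring1 | (exfalso; omega)
      rw [Finset.sum_congr rfl fun k _ => by rw [hc k],
        sum_pick n (2 * n) (-(-1 : ℂ) ^ i) (by omega) (by omega),
        MQ_last n hn, smul_smul, ← sub_smul]
      congr 1
      rw [hpar]; ring
  · rw [if_neg hij, if_neg (by omega), sub_zero]
    exact sum_cQ_zero n i j fun k => by
      unfold cQ; split_ifs <;> first | ring1 | (exfalso; omega)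

lemma MQ_row0 (n : ℕ) (hn : 2 ≤ n) (k a b : Fin (2 * n))
    (ha : (a : ℕ) = 0) (hb : 1 ≤ (b : ℕ)) :
    MQ n ((k : ℕ) + 1) a b =
      if (k : ℕ) = (b : ℕ) then
        (if (b : ℕ) = 2 * n - 1 then -2 else (-1) ^ ((b : ℕ) + 1)) else 0 := by
  have hk := k.isLt
  have hblt := b.isLt
  unfold MQ
  by_cases hk0 : (k : ℕ) = 0
  · rw [show (k : ℕ) + 1 = 1 from by omega, if_pos rfl]
    rw [Matrix.sum_apply]
    rw [Finset.sum_eq_zero fun m hm => by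
      simp only [Finset.mem_Icc] at hm
      rw [elemMat_apply, if_neg (by omega)]]
    rw [if_neg (by omega)]
  · rw [if_neg (by omega)]
    by_cases hklast : (k : ℕ) + 1 = 2 * n
    · rw [if_pos hklast, Matrix.smul_apply, elemMat_apply, smul_eq_mul]
      by_cases hb2 : (b : ℕ) = 2 * n - 1
      · rw [if_pos (by omega), if_pos (by omega), if_pos (by omega)]
        norm_num
      · rw [if_neg (by omega), if_neg (by omega)]
        norm_num
    · rw [if_neg hklast, Matrix.add_apply, Matrix.smul_apply, elemMat_apply,
        elemMat_apply, smul_eq_mul,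
        if_neg (show ¬((a : ℕ) + 1 = 2 * n - ((k : ℕ) + 1) + 1 ∧ (b : ℕ) + 1 = 2 * n) by omega)]
      by_cases hkb : (k : ℕ) = (b : ℕ)
      · rw [if_pos (by omega), if_pos hkb, if_neg (by omega), mul_one, add_zero, hkb]
      · rw [if_neg (by omega), if_neg hkb, mul_zero, add_zero]

lemma MQ_12 (n : ℕ) (hn : 2 ≤ n) (k a b : Fin (2 * n))
    (ha : (a : ℕ) = 1) (hb : (b : ℕ) = 2) :
    MQ n ((k : ℕ) + 1) a b = if (k : ℕ) = 0 then 1 else 0 := by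
  have hk := k.isLt
  unfold MQ
  by_cases hk0 : (k : ℕ) = 0
  · rw [show (k : ℕ) + 1 = 1 from by omega, if_pos rfl, if_pos hk0, Matrix.sum_apply]
    rw [Finset.sum_eq_single 2]
    · rw [elemMat_apply, if_pos (by omega)]
    · intro m hm hm2
      rw [elemMat_apply, if_neg (by omega)]
    · intro h2
      exact absurd (Finset.mem_Icc.mpr (by omega)) h2
  · rw [if_neg (by omega), if_neg hk0]
    by_cases hklast : (k : ℕ) + 1 = 2 * n
    · rw [if_pos hklast, Matrix.smul_apply, elemMat_apply, if_neg (by omega), smul_zero]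
    · rw [if_neg hklast, Matrix.add_apply, Matrix.smul_apply, elemMat_apply,
        elemMat_apply, if_neg (by omega), smul_zero, zero_add,
        if_neg (show ¬((a : ℕ) + 1 = 2 * n - ((k : ℕ) + 1) + 1 ∧ (b : ℕ) + 1 = 2 * n) by omega)]

lemma pick (N : ℕ) (u : Fin N → ℂ) (j : Fin N) (v : ℕ) (hj : (j : ℕ) = v) (c : ℂ) :
    (∑ k : Fin N, u k * (if (k : ℕ) = v then c else 0)) = u j * c := by
  subst hj
  rw [Finset.sum_eq_single j]
  · rw [if_pos rfl]
  · intro k _ hk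
    rw [if_neg (fun hv => hk (Fin.ext hv)), mul_zero]
  · intro hj'
    exact absurd (Finset.mem_univ j) hj'

theorem part2 (n : ℕ) (hn : 2 ≤ n) :
    Function.Injective
      (fun f : Fin (2 * n) → ℂ => ∑ i : Fin (2 * n), f i • MQ n ((i : ℕ) + 1)) := by
  intro f g h
  simp only at h
  have h' : ∀ a b : Fin (2 * n),
      (∑ k : Fin (2 * n), f k * MQ n ((k : ℕ) + 1) a b)
        = ∑ k : Fin (2 * n), g k * MQ n ((k : ℕ) + 1) a b := by
    intro a b
    have := congrFun (congrFun h a) b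
    simpa only [Matrix.sum_apply, Matrix.smul_apply, smul_eq_mul] using this
  funext i
  have hi := i.isLt
  by_cases hi0 : (i : ℕ) = 0
  · have key := h' ⟨1, by omega⟩ ⟨2, by omega⟩
    simp only [fun k => MQ_12 n hn k ⟨1, by omega⟩ ⟨2, by omega⟩ rfl rfl] at key
    rw [pick (2 * n) f i 0 hi0 1, pick (2 * n) g i 0 hi0 1, mul_one, mul_one] at key
    exact key
  · have key := h' ⟨0, by omega⟩ i
    simp only [fun k => MQ_row0 n hn k ⟨0, by omega⟩ i rfl (by omega)] at key
    rw [pick (2 * n) f i (i : ℕ) rfl _, pick (2 * n) g i (i : ℕ) rfl _] at key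
    have hc : (if (i : ℕ) = 2 * n - 1 then (-2 : ℂ) else (-1) ^ ((i : ℕ) + 1)) ≠ 0 := by
      split_ifs
      · norm_num
      · exact pow_ne_zero _ (by norm_num)
    exact mul_right_cancel₀ hc key

/-- The map `φ` sending `e_i` to `MQ n i`, extended linearly, is an injective
Lie algebra homomorphism from `Q_{2n}` to `gl(2n, ℂ)`: it carries each bracket
`[e_i,e_j]` to the matrix commutator, and it is injective. -/
theorem Q2n_minimal_representation (n : ℕ) (hn : 2 ≤ n) :
    (∀ i ∈ Finset.Icc 1 (2 * n), ∀ j ∈ Finset.Icc 1 (2 * n),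
      ∑ k ∈ Finset.Icc 1 (2 * n), cQ n i j k • MQ n k
        = MQ n i * MQ n j - MQ n j * MQ n i) ∧
    Function.Injective
      (fun f : Fin (2 * n) → ℂ => ∑ i : Fin (2 * n), f i • MQ n ((i : ℕ) + 1)) := by
  exact ⟨part1 n hn, part2 n hn⟩
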